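/- Let c ≥ 2 and let P_1,...,P_c be partitions of an n-element set S (n ≥ 1). Then there exists a partition of S into m blocks with m < 2^{c-1}·n^{1 - 1/2^{c-1}} such that for every block B of this partition there is a permutation σ of {1,...,c} with P_{σ(1)}|_B refining P_{σ(2)}|_B, P_{σ(2)}|_B refining P_{σ(3)}|_B, and so on up to P_{σ(c-1)}|_B refining P_{σ(c)}|_B. -/

import Mathlib

open Finset

/-- `P|_B` refines `P'|_B`: every nonempty part `Y ∩ B` of the restriction of `P` to `B` is
contained in some part `Z ∩ B` of the restriction of `P'` to `B`. -/
def RestrRefines {α : Type*} [Fintype α] [DecidableEq α]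
    (P P' : Finpartition (Finset.univ : Finset α)) (B : Finset α) : Prop :=
  ∀ Y ∈ P.parts, (Y ∩ B).Nonempty → ∃ Z ∈ P'.parts, Y ∩ B ⊆ Z ∩ B

section Aux

variable {α : Type*} [Fintype α] [DecidableEq α]

lemma restrRefines_mono {P P' : Finpartition (Finset.univ : Finset α)} {B C : Finset α}
    (h : RestrRefines P P' C) (hBC : B ⊆ C) : RestrRefines P P' B := by
  intro Y hY hne
  obtain ⟨x, hx⟩ := hne
  rw [mem_inter] at hx
  have hYC : (Y ∩ C).Nonempty := ⟨x, mem_inter.2 ⟨hx.1, hBC hx.2⟩⟩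
  obtain ⟨Z, hZ, hsub⟩ := h Y hY hYC
  refine ⟨Z, hZ, fun a ha => ?_⟩
  rw [mem_inter] at ha
  have : a ∈ Z ∩ C := hsub (mem_inter.2 ⟨ha.1, hBC ha.2⟩)
  exact mem_inter.2 ⟨(mem_inter.1 this).1, ha.2⟩

lemma restrRefines_of_subset_part {P' : Finpartition (Finset.univ : Finset α)} {w B : Finset α}
    (hw : w ∈ P'.parts) (hB : B ⊆ w) (P : Finpartition (Finset.univ : Finset α)) :
    RestrRefines P P' B := by
  intro Y _ _
  refine ⟨w, hw, fun a ha => ?_⟩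
  rw [mem_inter] at ha
  exact mem_inter.2 ⟨hB ha.2, ha.2⟩

/-- Existence of a "big" good block inside `C`: either contained in a part of `W`, or on which
`W` refines `Yt`, of size at least `√|C|`. -/
lemma exists_big_block (W Yt : Finpartition (Finset.univ : Finset α)) (C : Finset α)
    (hC : C.Nonempty) :
    ∃ B : Finset α, B ⊆ C ∧ B.Nonempty ∧
      ((∃ w ∈ W.parts, B ⊆ w) ∨ RestrRefines W Yt B) ∧ C.card ≤ B.card * B.card := by
  classical
  obtain ⟨x0, hx0⟩ := hC
  have hαne : (Finset.univ : Finset α).Nonempty := ⟨x0, mem_univ x0⟩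
  have hYt : Yt.parts.Nonempty := Yt.parts_nonempty (by
    intro h; rw [h] at hαne; exact not_nonempty_empty hαne)
  -- rows: parts of W meeting C
  set rows : Finset (Finset α) := W.parts.filter (fun w => (w ∩ C).Nonempty) with hrows
  have hrowsmem : ∀ w ∈ rows, w ∈ W.parts ∧ (w ∩ C).Nonempty := by
    intro w hw; exact ⟨(mem_filter.1 hw).1, (mem_filter.1 hw).2⟩
  have hrows_ne : rows.Nonempty := by
    obtain ⟨w, hw, hxw⟩ := W.exists_mem (mem_univ x0)
    exact ⟨w, mem_filter.2 ⟨hw, ⟨x0, mem_inter.2 ⟨hxw, hx0⟩⟩⟩⟩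
  -- chooser: for each w, a part of Yt maximizing |w ∩ y ∩ C|
  have hmax : ∀ w : Finset α, ∃ y ∈ Yt.parts, ∀ y' ∈ Yt.parts,
      (w ∩ y' ∩ C).card ≤ (w ∩ y ∩ C).card := fun w =>
    Finset.exists_max_image Yt.parts (fun y => (w ∩ y ∩ C).card) hYt
  choose g hg1 hg2 using hmax
  -- the type-2 block
  set B2 : Finset α := rows.biUnion (fun w => w ∩ g w ∩ C) with hB2
  -- the type-1 block
  obtain ⟨wstar, hwstar, hwstarmax⟩ :=
    Finset.exists_max_image rows (fun w => (w ∩ C).card) hrows_ne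
  set B1 : Finset α := wstar ∩ C with hB1def
  have hB1sub : B1 ⊆ C := inter_subset_right
  have hB2sub : B2 ⊆ C := by
    intro a ha
    obtain ⟨w, _, haw⟩ := mem_biUnion.1 ha
    exact (mem_inter.1 haw).2
  -- C is the disjoint union of the w ∩ C
  have hCup : C = rows.biUnion (fun w => w ∩ C) := by
    apply Finset.Subset.antisymm
    · intro a ha
      obtain ⟨w, hw, haw⟩ := W.exists_mem (mem_univ a)
      exact mem_biUnion.2 ⟨w, mem_filter.2 ⟨hw, ⟨a, mem_inter.2 ⟨haw, ha⟩⟩⟩,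
        mem_inter.2 ⟨haw, ha⟩⟩
    · intro a ha
      obtain ⟨w, _, haw⟩ := mem_biUnion.1 ha
      exact (mem_inter.1 haw).2
  have hdisj : ∀ w ∈ rows, ∀ w' ∈ rows, w ≠ w' → ∀ (s : Finset α) (t : Finset α),
      s ⊆ w → t ⊆ w' → Disjoint s t := by
    intro w hw w' hw' hne s t hs ht
    have : Disjoint w w' := W.disjoint (hrowsmem w hw).1 (hrowsmem w' hw').1 hne
    exact this.mono hs ht
  have hCcard : C.card = ∑ w ∈ rows, (w ∩ C).card := by
    conv_lhs => rw [hCup]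
    exact Finset.card_biUnion (fun w hw w' hw' hne =>
      hdisj w hw w' hw' hne _ _ inter_subset_left inter_subset_left)
  have hB2card : B2.card = ∑ w ∈ rows, (w ∩ g w ∩ C).card :=
    Finset.card_biUnion (fun w hw w' hw' hne =>
      hdisj w hw w' hw' hne _ _ (inter_subset_left.trans inter_subset_left)
        (inter_subset_left.trans inter_subset_left))
  -- each summand of B2 is at least 1
  have hterm : ∀ w ∈ rows, 1 ≤ (w ∩ g w ∩ C).card := by
    intro w hw
    obtain ⟨x, hx⟩ := (hrowsmem w hw).2
    rw [mem_inter] at hx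
    obtain ⟨y, hy, hxy⟩ := Yt.exists_mem (mem_univ x)
    have h1 : 1 ≤ (w ∩ y ∩ C).card := Finset.card_pos.2
      ⟨x, mem_inter.2 ⟨mem_inter.2 ⟨hx.1, hxy⟩, hx.2⟩⟩
    exact le_trans h1 (hg2 w y hy)
  have hrowsB2 : rows.card ≤ B2.card := by
    rw [hB2card]
    calc rows.card = ∑ _w ∈ rows, 1 := by simp
    _ ≤ _ := Finset.sum_le_sum hterm
  -- key inequality
  have hkey : C.card ≤ B2.card * B1.card := by
    calc C.card = ∑ w ∈ rows, (w ∩ C).card := hCcard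
    _ ≤ ∑ _w ∈ rows, B1.card := Finset.sum_le_sum (fun w hw => hwstarmax w hw)
    _ = rows.card * B1.card := by rw [Finset.sum_const, smul_eq_mul]
    _ ≤ B2.card * B1.card := Nat.mul_le_mul_right _ hrowsB2
  have hB1ne : B1.Nonempty := (hrowsmem wstar hwstar).2
  have hB2ne : B2.Nonempty := by
    obtain ⟨w, hw⟩ := hrows_ne
    have := hterm w hw
    obtain ⟨x, hx⟩ := Finset.card_pos.1 this
    exact ⟨x, mem_biUnion.2 ⟨w, hw, hx⟩⟩
  -- B2 is type 2
  have hB2type : RestrRefines W Yt B2 := by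
    intro Y hY hne
    refine ⟨g Y, hg1 Y, fun a ha => ?_⟩
    rw [mem_inter] at ha
    have haB2 := ha.2
    obtain ⟨w, hwr, haw⟩ := mem_biUnion.1 haB2
    rw [mem_inter, mem_inter] at haw
    have hwY : w = Y := W.eq_of_mem_parts (hrowsmem w hwr).1 hY haw.1.1 ha.1
    refine mem_inter.2 ⟨?_, haB2⟩
    rw [← hwY]; exact haw.1.2
  by_cases hcmp : B1.card ≤ B2.card
  · exact ⟨B2, hB2sub, hB2ne, Or.inr hB2type,
      le_trans hkey (Nat.mul_le_mul_left _ (le_trans hcmp (le_refl _)) |>.trans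
        (Nat.mul_le_mul_right _ (le_refl _)))⟩
  · refine ⟨B1, hB1sub, hB1ne, Or.inl ⟨wstar, (hrowsmem wstar hwstar).1, inter_subset_left⟩, ?_⟩
    have : B2.card ≤ B1.card := le_of_not_ge hcmp
    calc C.card ≤ B2.card * B1.card := hkey
    _ ≤ B1.card * B1.card := Nat.mul_le_mul_right _ this

/-- Greedy lemma: partition `C` into at most `2√|C| - 1` good blocks. -/
lemma greedy_cover (W Yt : Finpartition (Finset.univ : Finset α)) (C : Finset α) :
    ∃ F : Finset (Finset α),
      (∀ B ∈ F, B.Nonempty ∧ B ⊆ C ∧ ((∃ w ∈ W.parts, B ⊆ w) ∨ RestrRefines W Yt B)) ∧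
      (F : Set (Finset α)).PairwiseDisjoint id ∧ F.biUnion id = C ∧
      (C.Nonempty → (F.card : ℝ) ≤ 2 * Real.sqrt C.card - 1) := by
  classical
  induction C using Finset.strongInduction with
  | _ C IH =>
    rcases eq_or_ne C ∅ with rfl | hCne
    · refine ⟨∅, by simp, by simp, by simp, ?_⟩
      intro h; exact absurd rfl h.ne_empty
    have hC : C.Nonempty := nonempty_iff_ne_empty.2 hCne
    obtain ⟨B, hBsub, hBne, hBgood, hBbig⟩ := exists_big_block W Yt C hC
    have hss : C \ B ⊂ C := Finset.sdiff_ssubset hBsub hBne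
    obtain ⟨F', hF'good, hF'disj, hF'cov, hF'card⟩ := IH (C \ B) hss
    refine ⟨insert B F', ?_, ?_, ?_, ?_⟩
    · intro B' hB'
      rcases Finset.mem_insert.1 hB' with rfl | hB'
      · exact ⟨hBne, hBsub, hBgood⟩
      · obtain ⟨h1, h2, h3⟩ := hF'good B' hB'
        exact ⟨h1, h2.trans (sdiff_subset.trans (le_refl _)), h3⟩
    · rw [coe_insert]
      refine Set.PairwiseDisjoint.insert hF'disj ?_
      intro B' hB' _
      have : B' ⊆ C \ B := (hF'good B' hB').2.1
      simp only [id]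
      exact Finset.disjoint_sdiff.mono_right this
    · rw [Finset.biUnion_insert, hF'cov]
      simp only [id]
      rw [Finset.union_comm, Finset.sdiff_union_of_subset hBsub]
    · intro _
      -- numeric bound
      have hm1 : (1 : ℝ) ≤ (C.card : ℝ) := by
        have := Finset.card_pos.2 hC
        exact_mod_cast this
      have hcardins : ((insert B F').card : ℝ) ≤ (F'.card : ℝ) + 1 := by
        have := Finset.card_insert_le B F'
        exact_mod_cast this
      have hb1 : (1 : ℝ) ≤ (B.card : ℝ) := by
        have := Finset.card_pos.2 hBne
        exact_mod_cast this
      have hbig : (C.card : ℝ) ≤ (B.card : ℝ) * (B.card : ℝ) := by exact_mod_cast hBbig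
      have hbC : (B.card : ℝ) ≤ (C.card : ℝ) := by
        exact_mod_cast Finset.card_le_card hBsub
      have hsqrtm : (1 : ℝ) ≤ Real.sqrt C.card := by
        rw [show (1:ℝ) = Real.sqrt 1 by simp]
        exact Real.sqrt_le_sqrt hm1
      have hbsqrt : Real.sqrt C.card ≤ (B.card : ℝ) := by
        have : Real.sqrt C.card ≤ Real.sqrt ((B.card : ℝ) * B.card) := Real.sqrt_le_sqrt hbig
        rwa [Real.sqrt_mul_self (by positivity)] at this
      rcases eq_or_ne (C \ B) ∅ with hempty | hne
      · -- F' is empty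
        have hF'empty : F' = ∅ := by
          by_contra h
          obtain ⟨B', hB'⟩ := nonempty_iff_ne_empty.2 h
          have h1 := (hF'good B' hB').1
          have h2 := (hF'good B' hB').2.1
          rw [hempty] at h2
          exact absurd (h2 h1.choose_spec) (by simp)
        rw [hF'empty]
        have : ((insert B (∅ : Finset (Finset α))).card : ℝ) = 1 := by simp
        rw [this]
        linarith
      · have hCBne : (C \ B).Nonempty := nonempty_iff_ne_empty.2 hne
        have hF'bound := hF'card hCBne
        have hcardsd : ((C \ B).card : ℝ) = (C.card : ℝ) - (B.card : ℝ) := by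
          rw [Finset.card_sdiff_of_subset hBsub]
          have := Finset.card_le_card hBsub
          push_cast [Nat.cast_sub this]
          ring
        -- 2√(m-b) ≤ 2√m - 1
        have hkey : 2 * Real.sqrt ((C \ B).card) ≤ 2 * Real.sqrt C.card - 1 := by
          rw [hcardsd]
          have h4 : (4 : ℝ) * ((C.card : ℝ) - B.card) ≤ (2 * Real.sqrt C.card - 1) ^ 2 := by
            have hsq : Real.sqrt (C.card : ℝ) ^ 2 = (C.card : ℝ) :=
              Real.sq_sqrt (by positivity)
            nlinarith [hbsqrt, hsqrtm]
          have h5 : Real.sqrt (4 * ((C.card : ℝ) - B.card)) ≤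
              Real.sqrt ((2 * Real.sqrt C.card - 1) ^ 2) := Real.sqrt_le_sqrt h4
          rw [Real.sqrt_sq (by linarith)] at h5
          rw [show (4 : ℝ) * ((C.card : ℝ) - B.card) = ((C.card : ℝ) - B.card) * 2 ^ 2 by ring]
            at h5
          rw [Real.sqrt_mul (by linarith : (0:ℝ) ≤ (C.card : ℝ) - B.card),
            Real.sqrt_sq (by norm_num : (0:ℝ) ≤ 2)] at h5
          linarith [h5]
        calc ((insert B F').card : ℝ) ≤ (F'.card : ℝ) + 1 := hcardins
        _ ≤ (2 * Real.sqrt ((C \ B).card) - 1) + 1 := by linarith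
        _ = 2 * Real.sqrt ((C \ B).card) := by ring
        _ ≤ 2 * Real.sqrt C.card - 1 := hkey

/-- `B` admits a chain ordering of the `c` partitions. -/
def ChainedOn {c : ℕ} (P : Fin c → Finpartition (Finset.univ : Finset α)) (B : Finset α) :
    Prop :=
  ∃ l : List (Fin c), l.Nodup ∧ l.length = c ∧
    l.Chain' (fun a b => RestrRefines (P a) (P b) B)

/-- The inductive step: insert one more partition into a good cover. -/
lemma step_cover (c : ℕ) (P : Fin (c + 2) → Finpartition (Finset.univ : Finset α))
    (F_R : Finset (Finset α))
    (hgood : ∀ C ∈ F_R, C.Nonempty ∧ ChainedOn (fun i : Fin (c + 1) => P i.succ) C)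
    (hdisjR : (F_R : Set (Finset α)).PairwiseDisjoint id)
    (hcovR : F_R.biUnion id = Finset.univ)
    (hα : (Finset.univ : Finset α).Nonempty) :
    ∃ F : Finset (Finset α),
      (∀ B ∈ F, B.Nonempty ∧ ChainedOn P B) ∧
      (F : Set (Finset α)).PairwiseDisjoint id ∧ F.biUnion id = Finset.univ ∧
      (F.card : ℝ) ≤ 2 * Real.sqrt (F_R.card * Fintype.card α) - 1 := by
  classical
  have key : ∀ C ∈ F_R, ∃ Fc : Finset (Finset α),
      (∀ B ∈ Fc, B.Nonempty ∧ B ⊆ C ∧ ChainedOn P B) ∧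
      (Fc : Set (Finset α)).PairwiseDisjoint id ∧ Fc.biUnion id = C ∧
      (Fc.card : ℝ) ≤ 2 * Real.sqrt C.card - 1 := by
    intro C hC
    obtain ⟨hCne, l, hnd, hlen, hchain⟩ := hgood C hC
    cases l with
    | nil => simp at hlen
    | cons h t =>
      obtain ⟨Fc, hFcgood, hFcdisj, hFccov, hFccard⟩ :=
        greedy_cover (P 0) (P h.succ) C
      refine ⟨Fc, ?_, hFcdisj, hFccov, hFccard hCne⟩
      intro B hB
      obtain ⟨hBne, hBsub, hBgood⟩ := hFcgood B hB
      refine ⟨hBne, hBsub, ?_⟩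
      have hmapchain : ((h :: t).map Fin.succ).Chain'
          (fun a b => RestrRefines (P a) (P b) B) := by
        unfold List.Chain' at hchain ⊢
        rw [List.isChain_map]
        exact hchain.imp (fun a b hab => restrRefines_mono hab hBsub)
      have hmapnd : ((h :: t).map Fin.succ).Nodup :=
        hnd.map (Fin.succ_injective _)
      have hmaplen : ((h :: t).map Fin.succ).length = c + 1 := by
        rw [List.length_map]; exact hlen
      rcases hBgood with ⟨w, hw, hBw⟩ | href
      · -- type 1: append 0 at the end
        refine ⟨(h :: t).map Fin.succ ++ [0], ?_, ?_, ?_⟩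
        · refine hmapnd.append (List.nodup_singleton _) ?_
          intro a ha hb
          simp only [List.mem_singleton] at hb
          subst hb
          obtain ⟨x, _, hx⟩ := List.mem_map.1 ha
          exact Fin.succ_ne_zero x hx
        · rw [List.length_append, hmaplen]; rfl
        · unfold List.Chain'
          rw [List.isChain_append]
          refine ⟨hmapchain, List.isChain_singleton _, ?_⟩
          intro x _ y hy
          simp only [List.head?_cons, Option.mem_def, Option.some.injEq] at hy
          subst hy
          exact restrRefines_of_subset_part hw hBw (P x)
      · -- type 2: prepend 0
        refine ⟨0 :: (h :: t).map Fin.succ, ?_, ?_, ?_⟩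
        · refine List.nodup_cons.2 ⟨?_, hmapnd⟩
          intro h0
          obtain ⟨x, _, hx⟩ := List.mem_map.1 h0
          exact Fin.succ_ne_zero x hx
        · rw [List.length_cons, hmaplen]
        · unfold List.Chain'
          rw [List.map_cons, List.isChain_cons_cons]
          rw [List.map_cons] at hmapchain
          exact ⟨href, hmapchain⟩
  choose Fc h1 h2 h3 h4 using key
  refine ⟨F_R.attach.biUnion (fun C => Fc C.1 C.2), ?_, ?_, ?_, ?_⟩
  · intro B hB
    obtain ⟨C, _, hBC⟩ := mem_biUnion.1 hB
    obtain ⟨hne, _, hch⟩ := h1 C.1 C.2 B hBC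
    exact ⟨hne, hch⟩
  · intro B hB B' hB' hne
    simp only [coe_biUnion, Set.mem_iUnion, mem_coe, mem_attach, true_and,
      Set.mem_setOf_eq] at hB hB'
    obtain ⟨C, -, hBC⟩ := hB
    obtain ⟨C', -, hBC'⟩ := hB'
    rcases eq_or_ne C C' with rfl | hCC
    · exact h2 C.1 C.2 (mem_coe.2 hBC) (mem_coe.2 hBC') hne
    · have hCC1 : C.1 ≠ C'.1 := fun h => hCC (Subtype.ext h)
      have hd : Disjoint C.1 C'.1 := hdisjR C.2 C'.2 hCC1
      have hsB : B ⊆ C.1 := (h1 C.1 C.2 B hBC).2.1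
      have hsB' : B' ⊆ C'.1 := (h1 C'.1 C'.2 B' hBC').2.1
      exact hd.mono hsB hsB'
  · apply Finset.Subset.antisymm (Finset.subset_univ _)
    intro a _
    have ha : a ∈ F_R.biUnion id := by rw [hcovR]; exact mem_univ a
    obtain ⟨C, hC, haC⟩ := mem_biUnion.1 ha
    have : a ∈ (Fc C hC).biUnion id := by rw [h3 C hC]; exact haC
    obtain ⟨B, hB, haB⟩ := mem_biUnion.1 this
    exact mem_biUnion.2 ⟨B, mem_biUnion.2 ⟨⟨C, hC⟩, mem_attach _ _, hB⟩, haB⟩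
  · -- cardinality bound
    have hr1 : 1 ≤ F_R.card := by
      rcases Finset.eq_empty_or_nonempty F_R with rfl | hne
      · simp at hcovR
        obtain ⟨x, hx⟩ := hα
        rw [← hcovR] at hx
        simp at hx
      · exact Finset.card_pos.2 hne
    have hsum_n : ∑ C ∈ F_R, (C.card : ℝ) = (Fintype.card α : ℝ) := by
      have hcb : (F_R.biUnion id).card = ∑ C ∈ F_R, C.card := by
        apply Finset.card_biUnion
        intro x hx y hy hxy
        exact hdisjR hx hy hxy
      rw [hcovR, Finset.card_univ] at hcb
      exact_mod_cast hcb.symm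
    have hcs : ∑ C ∈ F_R, Real.sqrt C.card ≤
        Real.sqrt (F_R.card * Fintype.card α) := by
      rw [Real.le_sqrt (by positivity) (by positivity)]
      calc (∑ C ∈ F_R, Real.sqrt C.card) ^ 2
          ≤ (F_R.card : ℝ) * ∑ C ∈ F_R, (Real.sqrt C.card) ^ 2 :=
            sq_sum_le_card_mul_sum_sq
        _ = (F_R.card : ℝ) * ∑ C ∈ F_R, (C.card : ℝ) := by
            congr 1
            exact Finset.sum_congr rfl (fun C _ => Real.sq_sqrt (by positivity))
        _ = (F_R.card : ℝ) * (Fintype.card α : ℝ) := by rw [hsum_n]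
    calc ((F_R.attach.biUnion (fun C => Fc C.1 C.2)).card : ℝ)
        ≤ ∑ C ∈ F_R.attach, ((Fc C.1 C.2).card : ℝ) := by
          exact_mod_cast Finset.card_biUnion_le
      _ ≤ ∑ C ∈ F_R.attach, (2 * Real.sqrt C.1.card - 1) :=
          Finset.sum_le_sum (fun C _ => h4 C.1 C.2)
      _ = 2 * (∑ C ∈ F_R, Real.sqrt C.card) - F_R.card := by
          rw [Finset.sum_sub_distrib, ← Finset.mul_sum]
          congr 2
          · exact Finset.sum_attach F_R (fun C => Real.sqrt (C.card : ℝ))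
          · rw [Finset.sum_const, Finset.card_attach]; simp
      _ ≤ 2 * Real.sqrt (F_R.card * Fintype.card α) - F_R.card := by linarith
      _ ≤ 2 * Real.sqrt (F_R.card * Fintype.card α) - 1 := by
          have : (1 : ℝ) ≤ F_R.card := by exact_mod_cast hr1
          linarith

lemma bound_step (d : ℕ) {N r : ℝ} (hN : 1 ≤ N) (hr : 0 ≤ r)
    (hrR : r ≤ 2 ^ d * N ^ ((1 : ℝ) - 1 / 2 ^ d)) :
    2 * Real.sqrt (r * N) ≤ 2 ^ (d + 1) * N ^ ((1 : ℝ) - 1 / 2 ^ (d + 1)) := by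
  have hN0 : (0 : ℝ) < N := lt_of_lt_of_le one_pos hN
  have h2d : (0 : ℝ) < 2 ^ d := by positivity
  have hX : 2 ^ d * N ^ ((1 : ℝ) - 1 / 2 ^ d) * N = 2 ^ d * N ^ ((2 : ℝ) - 1 / 2 ^ d) := by
    rw [mul_assoc]
    congr 1
    rw [show N ^ ((1 : ℝ) - 1 / 2 ^ d) * N = N ^ ((1 : ℝ) - 1 / 2 ^ d) * N ^ (1 : ℝ) by
      rw [Real.rpow_one], ← Real.rpow_add hN0]
    congr 1
    ring
  have hexp : ((2 : ℝ) - 1 / 2 ^ d) * (1 / 2) = (1 : ℝ) - 1 / 2 ^ (d + 1) := by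
    rw [pow_succ]
    field_simp
  have hsqrtX : Real.sqrt (N ^ ((2 : ℝ) - 1 / 2 ^ d)) = N ^ ((1 : ℝ) - 1 / 2 ^ (d + 1)) := by
    rw [Real.sqrt_eq_rpow, ← Real.rpow_mul hN0.le, hexp]
  have hsqrt2d : Real.sqrt ((2 : ℝ) ^ d) ≤ 2 ^ d := by
    have h1 : ((2 : ℝ) ^ d) ≤ ((2 : ℝ) ^ d) ^ 2 := by nlinarith [one_le_pow₀ (by norm_num : (1:ℝ) ≤ 2) (n := d)]
    have := Real.sqrt_le_sqrt h1
    rwa [Real.sqrt_sq h2d.le] at this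
  have hNe : (0 : ℝ) ≤ N ^ ((1 : ℝ) - 1 / 2 ^ (d + 1)) := Real.rpow_nonneg hN0.le _
  calc 2 * Real.sqrt (r * N)
      ≤ 2 * Real.sqrt (2 ^ d * N ^ ((2 : ℝ) - 1 / 2 ^ d)) := by
        rw [← hX]
        have : r * N ≤ 2 ^ d * N ^ ((1 : ℝ) - 1 / 2 ^ d) * N :=
          mul_le_mul_of_nonneg_right hrR hN0.le
        linarith [Real.sqrt_le_sqrt this]
    _ = 2 * (Real.sqrt ((2 : ℝ) ^ d) * N ^ ((1 : ℝ) - 1 / 2 ^ (d + 1))) := by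
        rw [Real.sqrt_mul h2d.le, hsqrtX]
    _ ≤ 2 ^ (d + 1) * N ^ ((1 : ℝ) - 1 / 2 ^ (d + 1)) := by
        rw [← mul_assoc]
        apply mul_le_mul_of_nonneg_right _ hNe
        rw [pow_succ, mul_comm ((2:ℝ)^d) 2]
        linarith [hsqrt2d]

/-- The main covering lemma, by induction on the number of partitions. -/
lemma main_cover (d : ℕ) (hα : (Finset.univ : Finset α).Nonempty)
    (P : Fin (d + 1) → Finpartition (Finset.univ : Finset α)) :
    ∃ F : Finset (Finset α),
      (∀ B ∈ F, B.Nonempty ∧ ChainedOn P B) ∧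
      (F : Set (Finset α)).PairwiseDisjoint id ∧ F.biUnion id = Finset.univ ∧
      (F.card : ℝ) ≤ 2 ^ d * (Fintype.card α : ℝ) ^ ((1 : ℝ) - 1 / 2 ^ d) := by
  induction d with
  | zero =>
    refine ⟨{Finset.univ}, ?_, ?_, ?_, ?_⟩
    · intro B hB
      rw [Finset.mem_singleton] at hB
      subst hB
      exact ⟨hα, ⟨[0], List.nodup_singleton _, rfl, List.isChain_singleton _⟩⟩
    · simp
    · simp
    · have : (Fintype.card α : ℝ) ^ ((1 : ℝ) - 1 / 2 ^ 0) = 1 := by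
        norm_num
      rw [this]
      simp
  | succ d IH =>
    obtain ⟨F_R, hRgood, hRdisj, hRcov, hRcard⟩ := IH (fun i : Fin (d + 1) => P i.succ)
    obtain ⟨F, hFgood, hFdisj, hFcov, hFcard⟩ := step_cover d P F_R hRgood hRdisj hRcov hα
    refine ⟨F, hFgood, hFdisj, hFcov, ?_⟩
    have hN : (1 : ℝ) ≤ (Fintype.card α : ℝ) := by
      have : 0 < Fintype.card α := Fintype.card_pos_iff.2 ⟨hα.choose⟩
      exact_mod_cast this
    have := bound_step d hN (by positivity : (0:ℝ) ≤ (F_R.card : ℝ)) hRcard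
    linarith

end Aux

theorem c_partitions_base_sets (α : Type*) [Fintype α] [DecidableEq α] (n c : ℕ)
    (hn : 1 ≤ n) (hc : 2 ≤ c) (hcard : Fintype.card α = n)
    (P : Fin c → Finpartition (Finset.univ : Finset α)) :
    ∃ Q : Finpartition (Finset.univ : Finset α),
      (Q.parts.card : ℝ) < 2 ^ (c - 1) * (n : ℝ) ^ ((1 : ℝ) - 1 / 2 ^ (c - 1)) ∧
      ∀ B ∈ Q.parts, ∃ σ : Equiv.Perm (Fin c),
        ∀ (i : ℕ) (h : i + 1 < c),
          RestrRefines (P (σ ⟨i, Nat.lt_of_succ_lt h⟩)) (P (σ ⟨i + 1, h⟩)) B := by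
  classical
  obtain ⟨d, rfl⟩ : ∃ d, c = d + 2 := ⟨c - 2, by omega⟩
  subst hcard
  have hα : (Finset.univ : Finset α).Nonempty := by
    rw [← Finset.card_pos, Finset.card_univ]; exact hn
  obtain ⟨F_R, hRgood, hRdisj, hRcov, hRcard⟩ :=
    main_cover d hα (fun i : Fin (d + 1) => P i.succ)
  obtain ⟨F, hFgood, hFdisj, hFcov, hFcard⟩ := step_cover d P F_R hRgood hRdisj hRcov hα
  have hN : (1 : ℝ) ≤ (Fintype.card α : ℝ) := by exact_mod_cast hn
  have hb := bound_step d hN (by positivity : (0:ℝ) ≤ (F_R.card : ℝ)) hRcard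
  refine ⟨⟨F, Finset.supIndep_iff_pairwiseDisjoint.2 hFdisj,
      by rw [Finset.sup_eq_biUnion]; exact hFcov, ?_⟩, ?_, ?_⟩
  · intro hbot
    have := (hFgood ⊥ hbot).1
    simp only [Finset.bot_eq_empty] at this
    exact Finset.not_nonempty_empty this
  · show (F.card : ℝ) < _
    have e : d + 2 - 1 = d + 1 := rfl
    rw [e]
    calc (F.card : ℝ) ≤ 2 * Real.sqrt (F_R.card * Fintype.card α) - 1 := hFcard
      _ ≤ 2 ^ (d + 1) * (Fintype.card α : ℝ) ^ ((1 : ℝ) - 1 / 2 ^ (d + 1)) - 1 := by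
          linarith
      _ < 2 ^ (d + 1) * (Fintype.card α : ℝ) ^ ((1 : ℝ) - 1 / 2 ^ (d + 1)) := by linarith
  · intro B hB
    obtain ⟨l, hnd, hlen, hchain⟩ := (hFgood B hB).2
    have hinj : Function.Injective (fun i : Fin (d + 2) => l.get (Fin.cast hlen.symm i)) := by
      intro a b hab
      exact Fin.cast_injective _ ((List.nodup_iff_injective_get.1 hnd) hab)
    refine ⟨Equiv.ofBijective _ (Finite.injective_iff_bijective.1 hinj), ?_⟩
    intro i h
    have hget := List.isChain_iff_getElem.1 hchain i (by rw [hlen]; omega)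
    exact hget
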